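/- Method of Exchangeable Pairs. Let (X, X') be a matrix Stein pair in H_d × H_d with scale factor α, and let F : H_d → H_d be a measurable function satisfying E‖(X − X')·F(X)‖ < ∞. Then E[X·F(X)] = (1/(2α)) · E[(X − X')(F(X) − F(X'))]. -/

import Mathlib

open MeasureTheory
open scoped ComplexOrder Classical

noncomputable instance {m n : ℕ} : MeasurableSpace (Matrix (Fin m) (Fin n) ℂ) :=
  inferInstanceAs (MeasurableSpace (Fin m → Fin n → ℂ))

/-- The spectral norm (largest singular value) of a complex matrix. -/
noncomputable def specNorm {m n : ℕ} (A : Matrix (Fin m) (Fin n) ℂ) : ℝ :=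
  ‖LinearMap.toContinuousLinearMap (Matrix.toEuclideanLin A)‖

/-- The largest eigenvalue of a Hermitian matrix, via the Rayleigh quotient. -/
noncomputable def lmax {d : ℕ} (A : Matrix (Fin d) (Fin d) ℂ) : ℝ :=
  ⨆ x : Metric.sphere (0 : EuclideanSpace ℂ (Fin d)) 1,
    (inner ℂ ((x : EuclideanSpace ℂ (Fin d))) (Matrix.toEuclideanLin A x) : ℂ).re

/-- The smallest eigenvalue of a Hermitian matrix, via the Rayleigh quotient. -/
noncomputable def lmin {d : ℕ} (A : Matrix (Fin d) (Fin d) ℂ) : ℝ :=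
  ⨅ x : Metric.sphere (0 : EuclideanSpace ℂ (Fin d)) 1,
    (inner ℂ ((x : EuclideanSpace ℂ (Fin d))) (Matrix.toEuclideanLin A x) : ℂ).re

/-- The matrix exponential. -/
noncomputable def mexp {d : ℕ} (A : Matrix (Fin d) (Fin d) ℂ) : Matrix (Fin d) (Fin d) ℂ :=
  NormedSpace.exp A

/-- The Schatten `p`-norm `(tr |B|^p)^(1/p)` of a complex matrix, computed via the
eigenvalues of `Bᴴ * B`. -/
noncomputable def schattenNorm {d : ℕ} (p : ℝ) (B : Matrix (Fin d) (Fin d) ℂ) : ℝ :=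
  (∑ i, (Matrix.posSemidef_conjTranspose_mul_self B).isHermitian.eigenvalues i ^ (p / 2)) ^ (1 / p)

/-- The positive-semidefinite square root of a psd matrix (junk value `0` otherwise). -/
noncomputable def psdSqrt {d : ℕ} (M : Matrix (Fin d) (Fin d) ℂ) : Matrix (Fin d) (Fin d) ℂ :=
  if h : M.PosSemidef then
    (h.1.eigenvectorUnitary : Matrix (Fin d) (Fin d) ℂ) *
      Matrix.diagonal ((↑) ∘ (√·) ∘ h.1.eigenvalues) *
      (star h.1.eigenvectorUnitary : Matrix (Fin d) (Fin d) ℂ)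
  else 0

/-- The entrywise expectation of a random matrix. -/
noncomputable def matMean {Ω : Type*} [MeasurableSpace Ω] (μ : Measure Ω) {d : ℕ}
    (X : Ω → Matrix (Fin d) (Fin d) ℂ) : Matrix (Fin d) (Fin d) ℂ :=
  Matrix.of fun i j => ∫ ω, X ω i j ∂μ

/-- The normalized trace mgf `θ ↦ 𝔼 tr̄ exp (θ X)` of a random Hermitian matrix. -/
noncomputable def traceMgf {Ω : Type*} [MeasurableSpace Ω] (μ : Measure Ω) {d : ℕ}
    (X : Ω → Matrix (Fin d) (Fin d) ℂ) (θ : ℝ) : ℝ :=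
  ∫ ω, (Matrix.trace (mexp ((θ : ℂ) • X ω))).re / d ∂μ

/-- `(X, X') = (Ψ(Z), Ψ(Z'))` is a matrix Stein pair with scale factor `α`:
`(Z, Z')` is an exchangeable pair, `Ψ` takes Hermitian values,
`𝔼[X - X' ∣ Z] = α X` a.s., `α ∈ (0, 1]`, and `𝔼‖X‖² < ∞`. -/
structure IsMatrixSteinPair {Ω 𝒵 : Type*} [MeasurableSpace Ω] [MeasurableSpace 𝒵]
    {d : ℕ} (μ : Measure Ω) (Z Z' : Ω → 𝒵) (Ψ : 𝒵 → Matrix (Fin d) (Fin d) ℂ)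
    (α : ℝ) : Prop where
  measurable_fst : Measurable Z
  measurable_snd : Measurable Z'
  measurable_psi : ∀ i j, Measurable fun z => Ψ z i j
  hermitian : ∀ z, (Ψ z).IsHermitian
  exchangeable : μ.map (fun ω => (Z ω, Z' ω)) = μ.map fun ω => (Z' ω, Z ω)
  alpha_pos : 0 < α
  alpha_le_one : α ≤ 1
  stein : ∀ i j,
    μ[(fun ω => Ψ (Z ω) i j - Ψ (Z' ω) i j) | MeasurableSpace.comap Z inferInstance]
      =ᵐ[μ] fun ω => (α : ℂ) * Ψ (Z ω) i j
  memLp_two : ∀ i j, MemLp (fun ω => Ψ (Z ω) i j) 2 μ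

/-- The conditional variance `Δ_X = (1/(2α)) 𝔼[(X - X')² ∣ Z]` of a matrix Stein pair,
defined entrywise via conditional expectation with respect to `σ(Z)`. -/
noncomputable def condVar {Ω 𝒵 : Type*} [MeasurableSpace Ω] [MeasurableSpace 𝒵]
    {d : ℕ} (μ : Measure Ω) (Z Z' : Ω → 𝒵) (Ψ : 𝒵 → Matrix (Fin d) (Fin d) ℂ)
    (α : ℝ) : Ω → Matrix (Fin d) (Fin d) ℂ := fun ω =>
  Matrix.of fun i j => (1 / (2 * α) : ℂ) *
    (μ[(fun ω' => ((Ψ (Z ω') - Ψ (Z' ω')) * (Ψ (Z ω') - Ψ (Z' ω'))) i j)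
      | MeasurableSpace.comap Z inferInstance]) ω

/-- `s ↦ s log s` (with `0 log 0 = 0`) applied to the eigenvalues of a Hermitian matrix
(junk value `0` otherwise). -/
noncomputable def matLogSelf {d : ℕ} (M : Matrix (Fin d) (Fin d) ℂ) : Matrix (Fin d) (Fin d) ℂ :=
  if h : M.IsHermitian then h.cfc (fun x => x * Real.log x) else 0


section AuxLemmas

open Filter

lemma norm_entry_le_specNorm {m n : ℕ} (A : Matrix (Fin m) (Fin n) ℂ) (i : Fin m) (j : Fin n) :
    ‖A i j‖ ≤ specNorm A := by
  set L := LinearMap.toContinuousLinearMap (Matrix.toEuclideanLin A)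
  set v : EuclideanSpace ℂ (Fin n) := EuclideanSpace.single j 1
  have h2 : (L v : EuclideanSpace ℂ (Fin m)) i = A i j := by
    show ((Matrix.toEuclideanLin A) v : EuclideanSpace ℂ (Fin m)) i = A i j
    rw [Matrix.toEuclideanLin_apply]
    show (A.mulVec ((WithLp.equiv 2 (Fin n → ℂ)) v)) i = A i j
    have : (WithLp.equiv 2 (Fin n → ℂ)) v = Pi.single j 1 := rfl
    rw [this, Matrix.mulVec_single_one]; rfl
  have h3 : ‖A i j‖ ≤ ‖L v‖ := by
    have hin : (inner ℂ (EuclideanSpace.single i (1:ℂ)) (L v) : ℂ) = A i j := by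
      rw [EuclideanSpace.inner_single_left, h2]; simp
    calc ‖A i j‖ = ‖(inner ℂ (EuclideanSpace.single i (1:ℂ)) (L v) : ℂ)‖ := by rw [hin]
      _ ≤ ‖EuclideanSpace.single i (1:ℂ)‖ * ‖L v‖ := norm_inner_le_norm _ _
      _ = ‖L v‖ := by rw [EuclideanSpace.norm_single]; simp
  refine h3.trans ?_
  calc ‖L v‖ ≤ ‖L‖ * ‖v‖ := L.le_opNorm v
    _ = specNorm A := by rw [EuclideanSpace.norm_single]; simp [specNorm, v]; rfl

lemma condexp_clm_comp {α E F : Type*} [NormedAddCommGroup E] [NormedSpace ℝ E] [CompleteSpace E]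
    [NormedAddCommGroup F] [NormedSpace ℝ F] [CompleteSpace F]
    {m m0 : MeasurableSpace α} (hm : m ≤ m0) {μ : Measure α} [IsFiniteMeasure μ]
    (T : E →L[ℝ] F) {f : α → E} (hf : Integrable f μ) :
    (fun ω => T ((μ[f|m]) ω)) =ᵐ[μ] μ[(fun ω => T (f ω)) | m] := by
  refine ae_eq_condExp_of_forall_setIntegral_eq hm (T.integrable_comp hf) ?_ ?_ ?_
  · exact fun s _ _ => (T.integrable_comp integrable_condExp).integrableOn
  · intro s hs hμs
    rw [T.integral_comp_comm integrable_condExp.integrableOn,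
      setIntegral_condExp hm hf hs, T.integral_comp_comm hf.integrableOn]
  · exact StronglyMeasurable.aestronglyMeasurable
      (T.continuous.comp_stronglyMeasurable stronglyMeasurable_condExp)

lemma complex_mul_decomp (z w : ℂ) :
    z * w = ((z.re * w.re - z.im * w.im : ℝ) : ℂ)
      + Complex.I * ((z.re * w.im + z.im * w.re : ℝ) : ℂ) := by
  apply Complex.ext <;> simp [Complex.mul_re, Complex.mul_im]

lemma condexp_mul_of_bound_complex {α : Type*} {m m0 : MeasurableSpace α} (hm : m ≤ m0)
    {μ : Measure α} [IsFiniteMeasure μ] {f g : α → ℂ}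
    (hf : StronglyMeasurable[m] f) (hg : Integrable g μ) (c : ℝ)
    (hfb : ∀ x, ‖f x‖ ≤ c) :
    μ[(fun ω => f ω * g ω) | m] =ᵐ[μ] fun ω => f ω * ((μ[g|m]) ω) := by
  set f₁ : α → ℝ := fun ω => (f ω).re
  set f₂ : α → ℝ := fun ω => (f ω).im
  set g₁ : α → ℝ := fun ω => (g ω).re
  set g₂ : α → ℝ := fun ω => (g ω).im
  have hf₁ : StronglyMeasurable[m] f₁ := Complex.continuous_re.comp_stronglyMeasurable hf
  have hf₂ : StronglyMeasurable[m] f₂ := Complex.continuous_im.comp_stronglyMeasurable hf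
  have hg₁ : Integrable g₁ μ := by simpa using hg.re
  have hg₂ : Integrable g₂ μ := by simpa using hg.im
  have hf₁b : ∀ᵐ x ∂μ, ‖f₁ x‖ ≤ c := ae_of_all μ fun x =>
    (Complex.abs_re_le_norm (f x)).trans (hfb x)
  have hf₂b : ∀ᵐ x ∂μ, ‖f₂ x‖ ≤ c := ae_of_all μ fun x =>
    (Complex.abs_im_le_norm (f x)).trans (hfb x)
  have h11 := condExp_stronglyMeasurable_mul_of_bound hm hf₁ hg₁ c hf₁b
  have h12 := condExp_stronglyMeasurable_mul_of_bound hm hf₁ hg₂ c hf₁b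
  have h21 := condExp_stronglyMeasurable_mul_of_bound hm hf₂ hg₁ c hf₂b
  have h22 := condExp_stronglyMeasurable_mul_of_bound hm hf₂ hg₂ c hf₂b
  have hi11 : Integrable (f₁ * g₁) μ := hg₁.bdd_mul (hf₁.mono hm).aestronglyMeasurable hf₁b
  have hi12 : Integrable (f₁ * g₂) μ := hg₂.bdd_mul (hf₁.mono hm).aestronglyMeasurable hf₁b
  have hi21 : Integrable (f₂ * g₁) μ := hg₁.bdd_mul (hf₂.mono hm).aestronglyMeasurable hf₂b
  have hi22 : Integrable (f₂ * g₂) μ := hg₂.bdd_mul (hf₂.mono hm).aestronglyMeasurable hf₂b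
  set u : α → ℝ := f₁ * g₁ - f₂ * g₂
  set v : α → ℝ := f₁ * g₂ + f₂ * g₁
  have hu : Integrable u μ := hi11.sub hi22
  have hv : Integrable v μ := hi12.add hi21
  have hcu := condexp_clm_comp hm Complex.ofRealCLM hu
  have hcv := condexp_clm_comp hm Complex.ofRealCLM hv
  simp only [Complex.ofRealCLM_apply] at hcu hcv
  have hu_ce : μ[u|m] =ᵐ[μ] fun x => f₁ x * ((μ[g₁|m]) x) - f₂ x * ((μ[g₂|m]) x) := by
    refine (condExp_sub hi11 hi22 m).trans ?_
    filter_upwards [h11, h22] with x hx1 hx2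
    simp only [Pi.sub_apply, Pi.mul_apply] at *
    rw [hx1, hx2]
  have hv_ce : μ[v|m] =ᵐ[μ] fun x => f₁ x * ((μ[g₂|m]) x) + f₂ x * ((μ[g₁|m]) x) := by
    refine (condExp_add hi12 hi21 m).trans ?_
    filter_upwards [h12, h21] with x hx1 hx2
    simp only [Pi.add_apply, Pi.mul_apply] at *
    rw [hx1, hx2]
  have hgre := condexp_clm_comp hm Complex.reCLM hg
  have hgim := condexp_clm_comp hm Complex.imCLM hg
  simp only [Complex.reCLM_apply, Complex.imCLM_apply] at hgre hgim
  have hdecomp : (fun ω => f ω * g ω)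
      = fun ω => ((u ω : ℝ) : ℂ) + Complex.I * ((v ω : ℝ) : ℂ) := by
    funext ω
    simpa [u, v] using complex_mul_decomp (f ω) (g ω)
  have hiu : Integrable (fun ω => ((u ω : ℝ) : ℂ)) μ := Complex.ofRealCLM.integrable_comp hu
  have hiv' : Integrable (fun ω => ((v ω : ℝ) : ℂ)) μ := Complex.ofRealCLM.integrable_comp hv
  have hiv : Integrable (fun ω => Complex.I * ((v ω : ℝ) : ℂ)) μ := hiv'.const_mul _
  have hIv : μ[(fun ω => Complex.I * ((v ω : ℝ) : ℂ)) | m]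
      =ᵐ[μ] fun ω => Complex.I * ((μ[(fun ω => ((v ω : ℝ) : ℂ)) | m]) ω) := by
    have h := condExp_smul (μ := μ) (m := m) (Complex.I) (fun ω => ((v ω : ℝ) : ℂ))
    have he : μ[(fun ω => Complex.I * ((v ω : ℝ) : ℂ)) | m]
        = μ[Complex.I • (fun ω => ((v ω : ℝ) : ℂ)) | m] := by
      rfl
    rw [he]
    exact h.mono fun x hx => by simpa [smul_eq_mul] using hx
  calc μ[(fun ω => f ω * g ω) | m]
      = μ[(fun ω => ((u ω : ℝ) : ℂ) + Complex.I * ((v ω : ℝ) : ℂ)) | m] := by rw [hdecomp]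
    _ =ᵐ[μ] μ[(fun ω => ((u ω : ℝ) : ℂ)) | m] + μ[(fun ω => Complex.I * ((v ω : ℝ) : ℂ)) | m] :=
        condExp_add hiu hiv m
    _ =ᵐ[μ] fun ω => f ω * ((μ[g|m]) ω) := by
        filter_upwards [hIv, hcu.symm, hcv.symm, hu_ce, hv_ce, hgre.symm, hgim.symm]
          with x h1 h2 h3 h4 h5 h6 h7
        simp only [Pi.add_apply]
        rw [h1, h2, h3, h4, h5]
        rw [complex_mul_decomp (f x) ((μ[g|m]) x)]
        rw [h6]
        rw [h7]

end AuxLemmas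

/-- **Method of Exchangeable Pairs.**  If `(X, X') = (Ψ(Z), Ψ(Z'))` is a matrix Stein pair
with scale factor `α` and `F` is a measurable matrix function with
`𝔼‖(X - X')·F(X)‖ < ∞`, then `𝔼[X·F(X)] = (1/(2α)) 𝔼[(X - X')(F(X) - F(X'))]`
(as an identity of matrices, stated entrywise). -/
theorem method_of_exchangeable_pairs
    {Ω 𝒵 : Type*} [MeasurableSpace Ω] [TopologicalSpace 𝒵] [PolishSpace 𝒵]
    [MeasurableSpace 𝒵] [BorelSpace 𝒵]
    (μ : Measure Ω) [IsProbabilityMeasure μ] {d : ℕ}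
    (Z Z' : Ω → 𝒵) (Ψ : 𝒵 → Matrix (Fin d) (Fin d) ℂ) (α : ℝ)
    (hpair : IsMatrixSteinPair μ Z Z' Ψ α)
    (F : Matrix (Fin d) (Fin d) ℂ → Matrix (Fin d) (Fin d) ℂ)
    (hFmeas : ∀ i j, Measurable fun A : Matrix (Fin d) (Fin d) ℂ => F A i j)
    (hreg : Integrable (fun ω => specNorm ((Ψ (Z ω) - Ψ (Z' ω)) * F (Ψ (Z ω)))) μ) :
    ∀ i j, ∫ ω, (Ψ (Z ω) * F (Ψ (Z ω))) i j ∂μ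
      = (1 / (2 * (α : ℂ))) *
          ∫ ω, ((Ψ (Z ω) - Ψ (Z' ω)) * (F (Ψ (Z ω)) - F (Ψ (Z' ω)))) i j ∂μ := by
  intro i j
  classical
  have hZm := hpair.measurable_fst
  have hZ'm := hpair.measurable_snd
  have hm : MeasurableSpace.comap Z inferInstance ≤ (inferInstance : MeasurableSpace Ω) :=
    hZm.comap_le
  have hZmm : Measurable[MeasurableSpace.comap Z inferInstance] Z := Measurable.of_comap_le le_rfl
  have hΨm : Measurable Ψ :=
    measurable_pi_lambda _ fun a => measurable_pi_lambda _ fun b => hpair.measurable_psi a b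
  have hpairm : Measurable fun ω => (Z ω, Z' ω) := hZm.prodMk hZ'm
  have hpairm' : Measurable fun ω => (Z' ω, Z ω) := hZ'm.prodMk hZm
  -- the swap-transfer fact
  have hswap : ∀ (φ : 𝒵 × 𝒵 → ℂ), Measurable φ → Integrable (fun ω => φ (Z ω, Z' ω)) μ →
      Integrable (fun ω => φ (Z' ω, Z ω)) μ ∧
        ∫ ω, φ (Z ω, Z' ω) ∂μ = ∫ ω, φ (Z' ω, Z ω) ∂μ := by
    intro φ hφ hint
    have h1 : Integrable φ (μ.map (fun ω => (Z ω, Z' ω))) := by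
      rw [integrable_map_measure hφ.aestronglyMeasurable hpairm.aemeasurable]
      exact hint
    have h2 : Integrable φ (μ.map (fun ω => (Z' ω, Z ω))) := by
      rw [← hpair.exchangeable]; exact h1
    constructor
    · exact (integrable_map_measure hφ.aestronglyMeasurable hpairm'.aemeasurable).mp h2
    · rw [← integral_map hpairm.aemeasurable hφ.aestronglyMeasurable,
        ← integral_map hpairm'.aemeasurable hφ.aestronglyMeasurable, hpair.exchangeable]
  -- entry functions
  set q : Ω → ℂ := fun ω => (Ψ (Z ω) * F (Ψ (Z ω))) i j with hqdef
  set p : Ω → ℂ := fun ω => ((Ψ (Z ω) - Ψ (Z' ω)) * F (Ψ (Z ω))) i j with hpdef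
  set r : Ω → ℂ := fun ω => ((Ψ (Z ω) - Ψ (Z' ω)) * F (Ψ (Z' ω))) i j with hrdef
  have hq_eq : ∀ ω, q ω = ∑ k, Ψ (Z ω) i k * F (Ψ (Z ω)) k j := fun ω => by
    simp [hqdef, Matrix.mul_apply]
  have hp_eq : ∀ ω, p ω = ∑ k, (Ψ (Z ω) i k - Ψ (Z' ω) i k) * F (Ψ (Z ω)) k j := fun ω => by
    simp [hpdef, Matrix.mul_apply, Matrix.sub_apply]
  have hr_eq : ∀ ω, r ω = ∑ k, (Ψ (Z ω) i k - Ψ (Z' ω) i k) * F (Ψ (Z' ω)) k j := fun ω => by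
    simp [hrdef, Matrix.mul_apply, Matrix.sub_apply]
  have hqm : Measurable q := by
    rw [show q = fun ω => ∑ k, Ψ (Z ω) i k * F (Ψ (Z ω)) k j from funext hq_eq]
    exact Finset.measurable_sum _ fun k _ =>
      ((hpair.measurable_psi i k).comp hZm).mul ((hFmeas k j).comp (hΨm.comp hZm))
  have hpm : Measurable p := by
    rw [show p = fun ω => ∑ k, (Ψ (Z ω) i k - Ψ (Z' ω) i k) * F (Ψ (Z ω)) k j from funext hp_eq]
    exact Finset.measurable_sum _ fun k _ =>
      (((hpair.measurable_psi i k).comp hZm).sub ((hpair.measurable_psi i k).comp hZ'm)).mul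
        ((hFmeas k j).comp (hΨm.comp hZm))
  have hrm : Measurable r := by
    rw [show r = fun ω => ∑ k, (Ψ (Z ω) i k - Ψ (Z' ω) i k) * F (Ψ (Z' ω)) k j from funext hr_eq]
    exact Finset.measurable_sum _ fun k _ =>
      (((hpair.measurable_psi i k).comp hZm).sub ((hpair.measurable_psi i k).comp hZ'm)).mul
        ((hFmeas k j).comp (hΨm.comp hZ'm))
  -- p is integrable, dominated by the spectral norm
  have hp_bd : ∀ ω, ‖p ω‖ ≤ specNorm ((Ψ (Z ω) - Ψ (Z' ω)) * F (Ψ (Z ω))) := fun ω =>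
    norm_entry_le_specNorm _ i j
  have hp_int : Integrable p μ :=
    Integrable.mono' hreg hpm.aestronglyMeasurable (ae_of_all μ hp_bd)
  -- Step A : ∫ p = α • ∫ q  and  q is integrable
  have stepA : Integrable q μ ∧ ∫ ω, p ω ∂μ = (α : ℂ) * ∫ ω, q ω ∂μ := by
    have hXik_int : ∀ k, Integrable (fun ω => Ψ (Z ω) i k) μ := fun k =>
      (hpair.memLp_two i k).integrable one_le_two
    have hX'ik_int : ∀ k, Integrable (fun ω => Ψ (Z' ω) i k) μ := fun k =>
      (hswap (fun zz => Ψ zz.1 i k) ((hpair.measurable_psi i k).comp measurable_fst)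
        (hXik_int k)).1
    have hD_int : ∀ k, Integrable (fun ω => Ψ (Z ω) i k - Ψ (Z' ω) i k) μ := fun k =>
      (hXik_int k).sub (hX'ik_int k)
    -- truncation sets
    set s : ℕ → Set Ω := fun n => {ω | ∀ k, ‖F (Ψ (Z ω)) k j‖ ≤ (n : ℝ)} with hsdef
    have hsm : ∀ n, MeasurableSet[MeasurableSpace.comap Z inferInstance] (s n) := by
      intro n
      refine ⟨{z | ∀ k, ‖F (Ψ z) k j‖ ≤ (n : ℝ)}, ?_, rfl⟩
      rw [Set.setOf_forall]
      exact MeasurableSet.iInter fun k =>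
        measurableSet_le ((hFmeas k j).comp hΨm).norm measurable_const
    have hsm0 : ∀ n, MeasurableSet (s n) := fun n => hm _ (hsm n)
    have hs_mem : ∀ ω, ∃ N : ℕ, ∀ n, N ≤ n → ω ∈ s n := by
      intro ω
      obtain ⟨N, hN⟩ := exists_nat_ge (∑ k, ‖F (Ψ (Z ω)) k j‖)
      refine ⟨N, fun n hn k => ?_⟩
      calc ‖F (Ψ (Z ω)) k j‖ ≤ ∑ k', ‖F (Ψ (Z ω)) k' j‖ :=
            Finset.single_le_sum (f := fun k' => ‖F (Ψ (Z ω)) k' j‖)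
              (fun k' _ => norm_nonneg _) (Finset.mem_univ k)
        _ ≤ (N : ℝ) := hN
        _ ≤ (n : ℝ) := Nat.cast_le.mpr hn
    have hind_tend : ∀ (f : Ω → ℂ) (ω : Ω),
        Filter.Tendsto (fun n => (s n).indicator f ω) Filter.atTop (nhds (f ω)) := by
      intro f ω
      obtain ⟨N, hN⟩ := hs_mem ω
      refine Filter.Tendsto.congr' ?_ (tendsto_const_nhds (x := f ω))
      filter_upwards [Filter.eventually_ge_atTop N] with n hn
      rw [Set.indicator_of_mem (hN n hn)]
    -- conditional expectation identity for each truncation level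
    have hce : ∀ n : ℕ, μ[(fun ω => (s n).indicator p ω) | MeasurableSpace.comap Z inferInstance]
        =ᵐ[μ] fun ω => (α : ℂ) * (s n).indicator q ω := by
      intro n
      set G : Fin d → Ω → ℂ := fun k ω => (s n).indicator (fun ω' => F (Ψ (Z ω')) k j) ω with hGdef
      have hG_sm : ∀ k, StronglyMeasurable[MeasurableSpace.comap Z inferInstance] (G k) :=
        fun k => ((((hFmeas k j).comp hΨm).comp hZmm).stronglyMeasurable).indicator (hsm n)
      have hG_bd : ∀ k ω, ‖G k ω‖ ≤ (n : ℝ) := by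
        intro k ω
        by_cases hω : ω ∈ s n
        · rw [hGdef]; simp only [Set.indicator_of_mem hω]; exact hω k
        · rw [hGdef]; simp only [Set.indicator_of_mem, Set.indicator_of_notMem hω, norm_zero]
          exact Nat.cast_nonneg n
      have hterm_int : ∀ k, Integrable
          (fun ω => G k ω * (Ψ (Z ω) i k - Ψ (Z' ω) i k)) μ := fun k =>
        (hD_int k).bdd_mul ((hG_sm k).mono hm).aestronglyMeasurable (ae_of_all μ (hG_bd k))
      have hk : ∀ k, μ[(fun ω => G k ω * (Ψ (Z ω) i k - Ψ (Z' ω) i k)) |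
          MeasurableSpace.comap Z inferInstance]
          =ᵐ[μ] fun ω => G k ω * ((α : ℂ) * Ψ (Z ω) i k) := by
        intro k
        refine (condexp_mul_of_bound_complex hm (hG_sm k) (hD_int k) (n : ℝ) (hG_bd k)).trans ?_
        filter_upwards [hpair.stein i k] with ω hω
        rw [hω]
      have hsum := condExp_finsetSum (μ := μ) (m := MeasurableSpace.comap Z inferInstance)
        (s := Finset.univ)
        (f := fun k => fun ω => G k ω * (Ψ (Z ω) i k - Ψ (Z' ω) i k))
        (fun k _ => hterm_int k)
      have hall : ∀ᵐ ω ∂μ, ∀ k, (μ[(fun ω => G k ω * (Ψ (Z ω) i k - Ψ (Z' ω) i k)) |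
          MeasurableSpace.comap Z inferInstance]) ω = G k ω * ((α : ℂ) * Ψ (Z ω) i k) :=
        ae_all_iff.mpr fun k => hk k
      have hfun_eq : (fun ω => (s n).indicator p ω)
          = ∑ k, (fun ω => G k ω * (Ψ (Z ω) i k - Ψ (Z' ω) i k)) := by
        funext ω
        rw [Finset.sum_apply]
        by_cases hω : ω ∈ s n
        · rw [Set.indicator_of_mem hω, hp_eq]
          refine Finset.sum_congr rfl fun k _ => ?_
          rw [hGdef]; simp only [Set.indicator_of_mem hω]; ring
        · rw [Set.indicator_of_notMem hω]
          symm
          refine Finset.sum_eq_zero fun k _ => ?_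
          rw [hGdef]; simp only [Set.indicator_of_notMem hω, zero_mul]
      rw [hfun_eq]
      refine hsum.trans ?_
      filter_upwards [hall] with ω hω
      rw [Finset.sum_apply]
      have : ∑ k, (μ[(fun ω => G k ω * (Ψ (Z ω) i k - Ψ (Z' ω) i k)) |
          MeasurableSpace.comap Z inferInstance]) ω = ∑ k, G k ω * ((α : ℂ) * Ψ (Z ω) i k) :=
        Finset.sum_congr rfl fun k _ => hω k
      rw [this]
      by_cases hω2 : ω ∈ s n
      · rw [Set.indicator_of_mem hω2, hq_eq, Finset.mul_sum]
        refine Finset.sum_congr rfl fun k _ => ?_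
        rw [hGdef]; simp only [Set.indicator_of_mem hω2]; ring
      · rw [Set.indicator_of_notMem hω2, mul_zero]
        refine Finset.sum_eq_zero fun k _ => ?_
        rw [hGdef]; simp only [Set.indicator_of_notMem hω2, zero_mul]
    -- integrability of truncations
    have hip : ∀ n : ℕ, Integrable (fun ω => (s n).indicator p ω) μ := fun n =>
      hp_int.indicator (hsm0 n)
    have hiq0 : ∀ n : ℕ, Integrable (fun ω => (α : ℂ) * (s n).indicator q ω) μ := fun n =>
      integrable_condExp.congr (hce n)
    have hαne : (α : ℂ) ≠ 0 := Complex.ofReal_ne_zero.mpr (ne_of_gt hpair.alpha_pos)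
    have hiq' : ∀ n : ℕ, Integrable (fun ω => (s n).indicator q ω) μ := by
      intro n
      have h := (hiq0 n).const_mul ((α : ℂ)⁻¹)
      refine h.congr (ae_of_all μ fun ω => ?_)
      field_simp
    -- the per-level integral identity
    have hint_eq : ∀ n : ℕ, ∫ ω, (s n).indicator p ω ∂μ
        = (α : ℂ) * ∫ ω, (s n).indicator q ω ∂μ := by
      intro n
      have h1 := integral_condExp (μ := μ) (f := fun ω => (s n).indicator p ω) hm
      have h2 := integral_congr_ae (hce n)
      rw [← h1, h2]
      rw [show (fun ω => (α : ℂ) * (s n).indicator q ω)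
        = fun ω => (α : ℂ) • (s n).indicator q ω from rfl, integral_smul]
      rw [smul_eq_mul]
    -- the uniform L¹ bound for the truncations of q
    set C : ℝ := α⁻¹ * (2 * ∫ ω, specNorm ((Ψ (Z ω) - Ψ (Z' ω)) * F (Ψ (Z ω))) ∂μ) with hCdef
    have hbd : ∀ n : ℕ, ∫ ω, ‖(s n).indicator q ω‖ ∂μ ≤ C := by
      intro n
      set w : Ω → ℂ := μ[(fun ω => (s n).indicator p ω) | MeasurableSpace.comap Z inferInstance]
        with hwdef
      have hw_int : Integrable w μ := integrable_condExp
      have hα_pos := hpair.alpha_pos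
      have he : (fun ω => ‖(s n).indicator q ω‖) =ᵐ[μ] fun ω => α⁻¹ * ‖w ω‖ := by
        filter_upwards [hce n] with ω hω
        rw [hwdef]
        show ‖(s n).indicator q ω‖ = α⁻¹ * ‖w ω‖
        rw [show w ω = (α : ℂ) * (s n).indicator q ω from hω]
        rw [norm_mul, Complex.norm_real, Real.norm_eq_abs, abs_of_pos hα_pos]
        rw [← mul_assoc, inv_mul_cancel₀ (ne_of_gt hα_pos), one_mul]
      have hwre_int : Integrable (fun ω => |(w ω).re|) μ := by
        have := hw_int.re
        exact (by simpa using this : Integrable (fun ω => (w ω).re) μ).abs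
      have hwim_int : Integrable (fun ω => |(w ω).im|) μ := by
        have := hw_int.im
        exact (by simpa using this : Integrable (fun ω => (w ω).im) μ).abs
      have hpre_int : Integrable (fun ω => ((s n).indicator p ω).re) μ := by
        simpa using (hip n).re
      have hpim_int : Integrable (fun ω => ((s n).indicator p ω).im) μ := by
        simpa using (hip n).im
      have hre := condexp_clm_comp hm Complex.reCLM (hip n)
      have him := condexp_clm_comp hm Complex.imCLM (hip n)
      simp only [Complex.reCLM_apply] at hre
      simp only [Complex.imCLM_apply] at him
      have habs_bd : ∀ g : Ω → ℝ, Integrable g μ → (∀ ω, |g ω| ≤ ‖(s n).indicator p ω‖) →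
          ∫ ω, |(μ[g | MeasurableSpace.comap Z inferInstance]) ω| ∂μ
            ≤ ∫ ω, specNorm ((Ψ (Z ω) - Ψ (Z' ω)) * F (Ψ (Z ω))) ∂μ := by
        intro g hg hgb
        refine (integral_abs_condExp_le g).trans ?_
        refine integral_mono hg.abs hreg fun ω => ?_
        refine (hgb ω).trans ?_
        refine (norm_indicator_le_norm_self _ _).trans (hp_bd ω)
      have h_re_bd : ∫ ω, |(w ω).re| ∂μ
          ≤ ∫ ω, specNorm ((Ψ (Z ω) - Ψ (Z' ω)) * F (Ψ (Z ω))) ∂μ := by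
        have h1 : ∫ ω, |(w ω).re| ∂μ = ∫ ω,
            |(μ[(fun ω => ((s n).indicator p ω).re) | MeasurableSpace.comap Z inferInstance]) ω| ∂μ :=
          integral_congr_ae (hre.mono fun ω hω => congrArg (fun t => |t|) hω)
        rw [h1]
        refine habs_bd _ hpre_int fun ω => ?_
        exact (Complex.abs_re_le_norm _).trans (le_of_eq rfl)
      have h_im_bd : ∫ ω, |(w ω).im| ∂μ
          ≤ ∫ ω, specNorm ((Ψ (Z ω) - Ψ (Z' ω)) * F (Ψ (Z ω))) ∂μ := by
        have h1 : ∫ ω, |(w ω).im| ∂μ = ∫ ω,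
            |(μ[(fun ω => ((s n).indicator p ω).im) | MeasurableSpace.comap Z inferInstance]) ω| ∂μ :=
          integral_congr_ae (him.mono fun ω hω => congrArg (fun t => |t|) hω)
        rw [h1]
        refine habs_bd _ hpim_int fun ω => ?_
        exact (Complex.abs_im_le_norm _).trans (le_of_eq rfl)
      have hw_norm : ∫ ω, ‖w ω‖ ∂μ ≤ 2 * ∫ ω, specNorm ((Ψ (Z ω) - Ψ (Z' ω)) * F (Ψ (Z ω))) ∂μ := by
        have h1 : ∫ ω, ‖w ω‖ ∂μ ≤ ∫ ω, (|(w ω).re| + |(w ω).im|) ∂μ := by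
          refine integral_mono hw_int.norm (hwre_int.add hwim_int) fun ω => ?_
          exact Complex.norm_le_abs_re_add_abs_im (w ω)
        rw [integral_add hwre_int hwim_int] at h1
        calc ∫ ω, ‖w ω‖ ∂μ ≤ _ + _ := h1
          _ ≤ 2 * ∫ ω, specNorm ((Ψ (Z ω) - Ψ (Z' ω)) * F (Ψ (Z ω))) ∂μ := by
              rw [two_mul]; exact add_le_add h_re_bd h_im_bd
      rw [integral_congr_ae he, integral_const_mul]
      rw [hCdef]
      refine mul_le_mul_of_nonneg_left hw_norm (inv_nonneg.mpr (le_of_lt hα_pos))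
    -- q is integrable
    have hq_int : Integrable q μ := by
      refine ⟨hqm.aestronglyMeasurable, ?_⟩
      show (∫⁻ ω, (‖q ω‖₊ : ENNReal) ∂μ) < ⊤
      have hptwise : ∀ ω, (‖q ω‖₊ : ENNReal)
          = Filter.liminf (fun n => (‖(s n).indicator q ω‖₊ : ENNReal)) Filter.atTop := by
        intro ω
        symm
        refine Filter.Tendsto.liminf_eq ?_
        have h := hind_tend q ω
        have : Filter.Tendsto (fun n => ‖(s n).indicator q ω‖₊) Filter.atTop (nhds ‖q ω‖₊) :=
          (continuous_nnnorm.tendsto (q ω)).comp h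
        exact (ENNReal.tendsto_coe.mpr this)
      calc ∫⁻ ω, (‖q ω‖₊ : ENNReal) ∂μ
          = ∫⁻ ω, Filter.liminf (fun n => (‖(s n).indicator q ω‖₊ : ENNReal)) Filter.atTop ∂μ := by
            exact lintegral_congr fun ω => hptwise ω
        _ ≤ Filter.liminf (fun n => ∫⁻ ω, (‖(s n).indicator q ω‖₊ : ENNReal) ∂μ) Filter.atTop := by
            refine lintegral_liminf_le fun n => ?_
            exact (hqm.indicator (hsm0 n)).nnnorm.coe_nnreal_ennreal
        _ ≤ ENNReal.ofReal C := by
            have hn : ∀ n : ℕ, ∫⁻ ω, (‖(s n).indicator q ω‖₊ : ENNReal) ∂μ ≤ ENNReal.ofReal C := by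
              intro n
              change ∫⁻ ω, ‖(s n).indicator q ω‖ₑ ∂μ ≤ ENNReal.ofReal C
              rw [← ofReal_integral_norm_eq_lintegral_enorm (hiq' n)]
              exact ENNReal.ofReal_le_ofReal (hbd n)
            calc Filter.liminf (fun n => ∫⁻ ω, (‖(s n).indicator q ω‖₊ : ENNReal) ∂μ) Filter.atTop
                ≤ Filter.liminf (fun _ => ENNReal.ofReal C) Filter.atTop :=
                  Filter.liminf_le_liminf (Filter.Eventually.of_forall hn)
              _ = ENNReal.ofReal C := Filter.liminf_const _
        _ < ⊤ := ENNReal.ofReal_lt_top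
    refine ⟨hq_int, ?_⟩
    -- dominated convergence on both sides
    have hdct_p : Filter.Tendsto (fun n => ∫ ω, (s n).indicator p ω ∂μ)
        Filter.atTop (nhds (∫ ω, p ω ∂μ)) := by
      refine tendsto_integral_of_dominated_convergence (fun ω => ‖p ω‖)
        (fun n => (hip n).aestronglyMeasurable) hp_int.norm
        (fun n => ae_of_all μ fun ω => norm_indicator_le_norm_self _ _) ?_
      exact ae_of_all μ fun ω => hind_tend p ω
    have hdct_q : Filter.Tendsto (fun n => ∫ ω, (s n).indicator q ω ∂μ)
        Filter.atTop (nhds (∫ ω, q ω ∂μ)) := by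
      refine tendsto_integral_of_dominated_convergence (fun ω => ‖q ω‖)
        (fun n => (hiq' n).aestronglyMeasurable) hq_int.norm
        (fun n => ae_of_all μ fun ω => norm_indicator_le_norm_self _ _) ?_
      exact ae_of_all μ fun ω => hind_tend q ω
    have hdct_p' : Filter.Tendsto (fun n => ∫ ω, (s n).indicator p ω ∂μ)
        Filter.atTop (nhds ((α : ℂ) * ∫ ω, q ω ∂μ)) := by
      rw [show (fun n => ∫ ω, (s n).indicator p ω ∂μ)
        = fun n => (α : ℂ) * ∫ ω, (s n).indicator q ω ∂μ from funext hint_eq]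
      exact hdct_q.const_mul _
    exact tendsto_nhds_unique hdct_p hdct_p'
  -- Step B : ∫ p = - ∫ r, and r is integrable
  have stepB : Integrable r μ ∧ ∫ ω, p ω ∂μ = - ∫ ω, r ω ∂μ := by
    set φ : 𝒵 × 𝒵 → ℂ := fun zz => ((Ψ zz.1 - Ψ zz.2) * F (Ψ zz.1)) i j with hφdef
    have hφ_eq : ∀ zz, φ zz = ∑ k, (Ψ zz.1 i k - Ψ zz.2 i k) * F (Ψ zz.1) k j := fun zz => by
      simp [hφdef, Matrix.mul_apply, Matrix.sub_apply]
    have hφm : Measurable φ := by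
      rw [show φ = fun zz => ∑ k, (Ψ zz.1 i k - Ψ zz.2 i k) * F (Ψ zz.1) k j from funext hφ_eq]
      exact Finset.measurable_sum _ fun k _ =>
        (((hpair.measurable_psi i k).comp measurable_fst).sub
          ((hpair.measurable_psi i k).comp measurable_snd)).mul
          ((hFmeas k j).comp (hΨm.comp measurable_fst))
    have hφZZ' : (fun ω => φ (Z ω, Z' ω)) = p := rfl
    have hφZ'Z : ∀ ω, φ (Z' ω, Z ω) = - r ω := by
      intro ω
      rw [hφ_eq, hr_eq]
      rw [← Finset.sum_neg_distrib]
      exact Finset.sum_congr rfl fun k _ => by ring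
    obtain ⟨hint', heq'⟩ := hswap φ hφm (by rw [hφZZ']; exact hp_int)
    constructor
    · refine hint'.neg.congr (ae_of_all μ fun ω => ?_)
      simp only [Pi.neg_apply, hφZ'Z ω, neg_neg]
    · rw [show ∫ ω, p ω ∂μ = ∫ ω, φ (Z ω, Z' ω) ∂μ from by rw [hφZZ'], heq']
      rw [show (fun ω => φ (Z' ω, Z ω)) = fun ω => - r ω from funext hφZ'Z]
      rw [integral_neg]
  -- Step C : combine
  obtain ⟨hq_int, hA⟩ := stepA
  obtain ⟨hr_int, hB⟩ := stepB
  have hfinal : (fun ω => ((Ψ (Z ω) - Ψ (Z' ω)) * (F (Ψ (Z ω)) - F (Ψ (Z' ω)))) i j)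
      = fun ω => p ω - r ω := by
    funext ω
    rw [hp_eq, hr_eq, ← Finset.sum_sub_distrib]
    simp only [Matrix.mul_apply, Matrix.sub_apply]
    exact Finset.sum_congr rfl fun k _ => by ring
  rw [hfinal, integral_sub hp_int hr_int]
  have hαne : (α : ℂ) ≠ 0 := by
    exact_mod_cast Complex.ofReal_ne_zero.mpr (ne_of_gt hpair.alpha_pos)
  rw [show ∫ ω, r ω ∂μ = - ∫ ω, p ω ∂μ from by rw [hB]; ring]
  rw [hA]
  field_simp
  ring
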